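/- arXiv:2110.01847 — 2 statements merged into one kernel-verified Lean document; each statement's English description precedes it below -/
import Mathlib

section
/- Let q ≡ 1 (mod 4) be a prime power, i ∈ F_q with i² = -1, and let G = PSL(2,q) act on P = (F_q² \ {0})/⟨i⟩, the nonzero vectors modulo scalar multiplication by powers of i. Then the stabilizer in G of the class of the vector (1,0) is isomorphic to (C_p)^α ⋊ C₂, where q = p^α. -/
open Matrix MulAction Pointwise

abbrev SL2 (F : Type) [Field F] := Matrix.SpecialLinearGroup (Fin 2) F

abbrev PSL2 (F : Type) [Field F] := SL2 F ⧸ Subgroup.center (SL2 F)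

/-- Nonzero vectors of `F²`. -/
def Vec (F : Type) [Field F] := {v : Fin 2 → F // v ≠ 0}

/-- Two nonzero vectors are related if they differ by multiplication by a power of `i`. -/
def vrel (F : Type) [Field F] (i : F) (v w : Vec F) : Prop :=
  ∃ n : ℕ, (w.1 : Fin 2 → F) = i ^ n • v.1

/-- The point set `P = (F² \ {0})/⟨i⟩`. -/
def Pts (F : Type) [Field F] (i : F) := Quot (vrel F i)

/-- The class of a nonzero vector in `P`. -/
def mkPt (F : Type) [Field F] (i : F) (v : Fin 2 → F) (hv : v ≠ 0) : Pts F i :=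
  Quot.mk _ ⟨v, hv⟩

lemma vec_fst_ne_zero {F : Type} [Field F] (b : F) : ![(1 : F), b] ≠ 0 := by
  intro h
  simpa using congrFun h 0

lemma vec_snd_ne_zero {F : Type} [Field F] (a : F) : ![a, (1 : F)] ≠ 0 := by
  intro h
  simpa using congrFun h 1

/-- `SL(2,q)` acts on nonzero vectors. -/
def slVecSMul {F : Type} [Field F] (A : SL2 F) (v : Vec F) : Vec F :=
  ⟨(A : Matrix (Fin 2) (Fin 2) F) *ᵥ v.1, by
    intro h
    apply v.2
    have h2 : ((A⁻¹ : SL2 F) : Matrix (Fin 2) (Fin 2) F) *ᵥ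
        ((A : Matrix (Fin 2) (Fin 2) F) *ᵥ v.1) = 0 := by rw [h, Matrix.mulVec_zero]
    rwa [Matrix.mulVec_mulVec, ← Matrix.SpecialLinearGroup.coe_mul, inv_mul_cancel,
      Matrix.SpecialLinearGroup.coe_one, Matrix.one_mulVec] at h2⟩

instance (F : Type) [Field F] (i : F) : SMul (SL2 F) (Pts F i) :=
  ⟨fun A => Quot.map (slVecSMul A) (by
    rintro v w ⟨n, hn⟩
    exact ⟨n, by simp [slVecSMul, hn, Matrix.mulVec_smul]⟩)⟩

instance (F : Type) [Field F] (i : F) : MulAction (SL2 F) (Pts F i) where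
  one_smul p := by
    induction p using Quot.ind with | _ v => ?_
    show Quot.mk _ (slVecSMul 1 v) = Quot.mk _ v
    congr 1
    apply Subtype.ext
    show ((1 : SL2 F) : Matrix (Fin 2) (Fin 2) F) *ᵥ v.1 = v.1
    rw [Matrix.SpecialLinearGroup.coe_one, Matrix.one_mulVec]
  mul_smul A B p := by
    induction p using Quot.ind with | _ v => ?_
    show Quot.mk _ (slVecSMul (A * B) v) = Quot.mk _ (slVecSMul A (slVecSMul B v))
    congr 1
    apply Subtype.ext
    show ((A * B : SL2 F) : Matrix (Fin 2) (Fin 2) F) *ᵥ v.1 =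
      (A : Matrix (Fin 2) (Fin 2) F) *ᵥ ((B : Matrix (Fin 2) (Fin 2) F) *ᵥ v.1)
    rw [Matrix.SpecialLinearGroup.coe_mul, Matrix.mulVec_mulVec]

/-- The stabilizer in `PSL(2,q)` of a point of `P`, i.e. the image in the quotient
`PSL(2,q) = SL(2,q)/center` of the stabilizer in `SL(2,q)`. -/
def pslPtStab (F : Type) [Field F] (i : F) (p : Pts F i) : Subgroup (PSL2 F) :=
  (MulAction.stabilizer (SL2 F) p).map (QuotientGroup.mk' (Subgroup.center (SL2 F)))

/-- The setwise stabilizer in `PSL(2,q)` of a set of points of `P`. -/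
def pslSetStab (F : Type) [Field F] (i : F) (s : Set (Pts F i)) : Subgroup (PSL2 F) :=
  (MulAction.stabilizer (SL2 F) s).map (QuotientGroup.mk' (Subgroup.center (SL2 F)))

section AuxDefs

variable {F : Type} [Field F]

/-- Upper unitriangular matrix in `SL(2,F)`. -/
def uMat (b : F) : SL2 F :=
  ⟨!![1, b; 0, 1], by simp [Matrix.det_fin_two_of]⟩

/-- The diagonal matrix `diag(i, -i)` in `SL(2,F)`, where `i² = -1`. -/
def wMat (i : F) (hi : i ^ 2 = -1) : SL2 F :=
  ⟨!![i, 0; 0, -i], by rw [Matrix.det_fin_two_of]; linear_combination -hi⟩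

/-- The negative identity in `SL(2,F)`. -/
def negI : SL2 F :=
  ⟨(-1 : Matrix (Fin 2) (Fin 2) F), by simp [Matrix.det_neg]⟩

lemma negI_mem_center : (negI : SL2 F) ∈ Subgroup.center (SL2 F) := by
  rw [Subgroup.mem_center_iff]
  intro g
  apply Subtype.ext
  show (g : Matrix (Fin 2) (Fin 2) F) * (-1) = (-1) * (g : Matrix (Fin 2) (Fin 2) F)
  simp

/-- The homomorphism from `Multiplicative (ZMod 2)` to a group determined by an element of
order dividing 2. -/
def order2Hom {G : Type*} [Group G] (w : G) (hw : w * w = 1) :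
    Multiplicative (ZMod 2) →* G where
  toFun g := w ^ (Multiplicative.toAdd g).val
  map_one' := pow_zero w
  map_mul' x y := by
    have hcase : ∀ z : Multiplicative (ZMod 2),
        Multiplicative.toAdd z = 0 ∨ Multiplicative.toAdd z = 1 := by decide
    have hadd : ∀ x y : Multiplicative (ZMod 2),
        Multiplicative.toAdd (x * y) = Multiplicative.toAdd x + Multiplicative.toAdd y :=
      fun _ _ => rfl
    show w ^ (Multiplicative.toAdd (x * y)).val
        = w ^ (Multiplicative.toAdd x).val * w ^ (Multiplicative.toAdd y).val
    rcases hcase x with hx | hx <;> rcases hcase y with hy | hy <;>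
      rw [hadd x y, hx, hy] <;>
      simp only [show ((0 : ZMod 2) + 0) = 0 from rfl, show ((0 : ZMod 2) + 1) = 1 from rfl,
        show ((1 : ZMod 2) + 0) = 1 from rfl, show ((1 : ZMod 2) + 1) = 0 from rfl,
        show ((0 : ZMod 2)).val = 0 from rfl, show ((1 : ZMod 2)).val = 1 from rfl,
        pow_zero, pow_one, one_mul, mul_one]
    exact hw.symm

lemma vrel_equivalence (i : F) (hi : i ^ 2 = -1) : Equivalence (vrel F i) := by
  have h4 : i ^ 4 = 1 := by
    have : i ^ 4 = (i ^ 2) ^ 2 := by ring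
    rw [this, hi]; ring
  constructor
  · intro v; exact ⟨0, by simp⟩
  · rintro v w ⟨n, hn⟩
    refine ⟨3 * n, ?_⟩
    rw [hn, smul_smul, ← pow_add]
    have h1 : 3 * n + n = 4 * n := by ring
    rw [h1, pow_mul, h4, one_pow, one_smul]
  · rintro v w x ⟨n, hn⟩ ⟨m, hm⟩
    exact ⟨m + n, by rw [hm, hn, smul_smul, ← pow_add]⟩

lemma mulVec_e0 (A : Matrix (Fin 2) (Fin 2) F) : A *ᵥ ![1, 0] = ![A 0 0, A 1 0] := by
  funext j
  fin_cases j <;>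
    simp [Matrix.mulVec, dotProduct, Fin.sum_univ_two]

end AuxDefs
section MoreAux

variable {F : Type} [Field F]

lemma uMat_zero : (uMat (0 : F)) = 1 := by
  apply Subtype.ext
  show !![(1:F), 0; 0, 1] = (1 : Matrix (Fin 2) (Fin 2) F)
  ext x y
  fin_cases x <;> fin_cases y <;> simp [Matrix.one_apply]

lemma uMat_mul (a b : F) : uMat a * uMat b = uMat (a + b) := by
  apply Subtype.ext
  show (uMat a : Matrix (Fin 2) (Fin 2) F) * (uMat b : Matrix (Fin 2) (Fin 2) F)
      = (uMat (a + b) : Matrix (Fin 2) (Fin 2) F)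
  ext x y
  fin_cases x <;> fin_cases y <;>
    simp [uMat, Matrix.mul_apply, Fin.sum_univ_two] <;> ring

lemma uMat_inv (b : F) : (uMat b)⁻¹ = uMat (-b) := by
  apply inv_eq_of_mul_eq_one_right
  rw [uMat_mul, add_neg_cancel, uMat_zero]

lemma w_u_comm (i : F) (hi : i ^ 2 = -1) (b : F) :
    wMat i hi * uMat b = uMat (-b) * wMat i hi := by
  apply Subtype.ext
  show (wMat i hi : Matrix (Fin 2) (Fin 2) F) * (uMat b : Matrix (Fin 2) (Fin 2) F)
      = (uMat (-b) : Matrix (Fin 2) (Fin 2) F) * (wMat i hi : Matrix (Fin 2) (Fin 2) F)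
  ext x y
  fin_cases x <;> fin_cases y <;>
    simp [uMat, wMat, Matrix.mul_apply, Fin.sum_univ_two] <;> ring

lemma wMat_sq (i : F) (hi : i ^ 2 = -1) : wMat i hi * wMat i hi = (negI : SL2 F) := by
  apply Subtype.ext
  show (wMat i hi : Matrix (Fin 2) (Fin 2) F) * (wMat i hi : Matrix (Fin 2) (Fin 2) F)
      = (negI : SL2 F)
  ext x y
  fin_cases x <;> fin_cases y <;>
    simp [wMat, negI, Matrix.mul_apply, Fin.sum_univ_two, Matrix.one_apply] <;>
    linear_combination hi

/-- The matrix `[[0,-1],[1,0]]` in `SL(2,F)`. -/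
def sMat (F : Type) [Field F] : SL2 F :=
  ⟨!![0, -1; 1, 0], by simp [Matrix.det_fin_two_of]⟩

end MoreAux
/-- The stabilizer in `PSL(2,q)` of the point `[(1,0)]` of `P = (F_q²∖{0})/⟨i⟩` is
isomorphic to `(C_p)^α ⋊ C₂`, where `q = p^α`. -/
theorem stmt_3 (p α : ℕ) [Fact p.Prime] (hα : 0 < α)
    (F : Type) [Field F] [Fintype F]
    (hcard : Fintype.card F = p ^ α) (hq : Fintype.card F % 4 = 1)
    (i : F) (hi : i ^ 2 = -1) :
    ∃ φ : Multiplicative (ZMod 2) →* MulAut (Fin α → Multiplicative (ZMod p)),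
      Nonempty ((pslPtStab F i (mkPt F i ![1, 0] (vec_fst_ne_zero 0))) ≃*
        SemidirectProduct (Fin α → Multiplicative (ZMod p)) (Multiplicative (ZMod 2)) φ) := by
  classical
  have hp : p.Prime := Fact.out
  have hα' : α ≠ 0 := hα.ne'
  rw [hcard] at hq
  have hpne2 : p ≠ 2 := by
    rintro rfl
    have h2 : 2 ∣ 2 ^ α := dvd_pow_self 2 hα'
    omega
  haveI hchar : CharP F p := by
    have hdvd : p ∣ ringChar F := by
      rw [prime_dvd_char_iff_dvd_card, hcard]
      exact dvd_pow_self p hα'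
    have hrc : (ringChar F).Prime := CharP.char_is_prime F (ringChar F)
    exact ringChar.of_eq ((Nat.prime_dvd_prime_iff_eq hp hrc).mp hdvd).symm
  have two_ne : (2 : F) ≠ 0 := by
    intro h2
    have h2' : (((2 : ℕ)) : F) = 0 := by exact_mod_cast h2
    exact hpne2 ((Nat.prime_dvd_prime_iff_eq hp Nat.prime_two).mp
      ((CharP.cast_eq_zero_iff F p 2).mp h2'))
  have i_ne : i ≠ 0 := by
    intro h
    exact one_ne_zero (α := F) (by linear_combination hi - i * h)
  have h4 : i ^ 4 = 1 := by
    have h' : i ^ 4 = (i ^ 2) ^ 2 := by ring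
    rw [h', hi]; ring
  letI : Algebra (ZMod p) F := ZMod.algebra F p
  haveI : Module.Finite (ZMod p) F := Module.Finite.of_finite (R := ZMod p)
  have hrank : Module.finrank (ZMod p) F = α := by
    have hc : Fintype.card F = Fintype.card (ZMod p) ^ Module.finrank (ZMod p) F :=
      Module.card_eq_pow_finrank
    rw [ZMod.card, hcard] at hc
    exact Nat.pow_right_injective hp.two_le hc.symm
  let e : F ≃+ (Fin α → ZMod p) :=
    (Module.finBasisOfFinrankEq (ZMod p) F hrank).equivFun.toAddEquiv
  let e' : Multiplicative F ≃* (Fin α → Multiplicative (ZMod p)) :=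
    (AddEquiv.toMultiplicative e).trans (MulEquiv.piMultiplicative fun _ => ZMod p)
  let φ : Multiplicative (ZMod 2) →* MulAut (Fin α → Multiplicative (ZMod p)) :=
    order2Hom (MulEquiv.inv _) (by
      ext x
      exact congrFun (inv_inv x) _)
  refine ⟨φ, ?_⟩
  let mk : SL2 F →* PSL2 F := QuotientGroup.mk' (Subgroup.center (SL2 F))
  let uH : Multiplicative F →* SL2 F :=
    { toFun := fun b => uMat (Multiplicative.toAdd b)
      map_one' := uMat_zero
      map_mul' := fun x y => (uMat_mul _ _).symm }
  let f₁ : (Fin α → Multiplicative (ZMod p)) →* PSL2 F :=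
    (mk.comp uH).comp e'.symm.toMonoidHom
  have hwcen : mk (wMat i hi) * mk (wMat i hi) = 1 := by
    rw [← _root_.map_mul, wMat_sq]
    exact (QuotientGroup.eq_one_iff _).mpr negI_mem_center
  let f₂ : Multiplicative (ZMod 2) →* PSL2 F := order2Hom (mk (wMat i hi)) hwcen
  have hf₁ : ∀ n, f₁ n = mk (uMat (Multiplicative.toAdd (e'.symm n))) := fun n => rfl
  have hgcase : ∀ g : Multiplicative (ZMod 2),
      (Multiplicative.toAdd g).val = 0 ∨ (Multiplicative.toAdd g).val = 1 := by decide
  have huinvw : ∀ b : F, (uMat b)⁻¹ = wMat i hi * uMat b * (wMat i hi)⁻¹ := by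
    intro b
    rw [uMat_inv, w_u_comm, mul_assoc, mul_inv_cancel, mul_one]
  have hcompat : ∀ g, f₁.comp ((φ g).toMonoidHom) =
      (MulAut.conj (f₂ g)).toMonoidHom.comp f₁ := by
    intro g
    ext n
    simp only [MonoidHom.comp_apply, MulEquiv.coe_toMonoidHom, MulAut.conj_apply]
    have hfφ : φ g n = ((MulEquiv.inv (Fin α → Multiplicative (ZMod p)) : MulAut _) ^
        (Multiplicative.toAdd g).val) n := rfl
    have hf₂ : f₂ g = mk (wMat i hi) ^ (Multiplicative.toAdd g).val := rfl
    rcases hgcase g with hg | hg <;> rw [hg] at hfφ hf₂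
    · rw [pow_zero, MulAut.one_apply] at hfφ
      rw [pow_zero] at hf₂
      rw [hfφ, hf₂]
      simp
    · rw [pow_one] at hfφ hf₂
      have hInv : (MulEquiv.inv (Fin α → Multiplicative (ZMod p)) : MulAut _) n = n⁻¹ := rfl
      rw [hfφ, hf₂, hInv, _root_.map_inv, hf₁ n, ← _root_.map_inv mk, ← _root_.map_inv mk, ← _root_.map_mul, ← _root_.map_mul]
      exact congrArg mk (huinvw _)
  let ψ := SemidirectProduct.lift f₁ f₂ hcompat
  have hψ : ∀ x : SemidirectProduct (Fin α → Multiplicative (ZMod p))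
      (Multiplicative (ZMod 2)) φ, ψ x = f₁ x.left * f₂ x.right := fun _ => rfl
  -- injectivity
  have hinj : Function.Injective ψ := by
    rw [injective_iff_map_eq_one]
    intro a ha
    rw [hψ, hf₁] at ha
    set b := Multiplicative.toAdd (e'.symm a.left) with hb
    have hf2 : f₂ a.right = mk (wMat i hi) ^ (Multiplicative.toAdd a.right).val := rfl
    have hleft : b = 0 → a.left = 1 := by
      intro h0
      have h1 : e'.symm a.left = 1 := by
        have : Multiplicative.toAdd (e'.symm a.left) = Multiplicative.toAdd
            (1 : Multiplicative F) := h0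
        exact Multiplicative.toAdd.injective this
      have := congrArg e' h1
      rwa [MulEquiv.apply_symm_apply, _root_.map_one] at this
    rcases hgcase a.right with hg | hg <;> rw [hg] at hf2
    · rw [pow_zero] at hf2
      rw [hf2, mul_one] at ha
      have hmem : uMat b ∈ Subgroup.center (SL2 F) := (QuotientGroup.eq_one_iff _).mp ha
      have hcomm := (Subgroup.mem_center_iff.mp hmem) (sMat F)
      have hentry := congrFun (congrFun (congrArg Subtype.val hcomm) 0) 0
      have hb0 : b = 0 := by
        simpa [uMat, sMat, Matrix.SpecialLinearGroup.coe_mul,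
          Matrix.mul_apply, Fin.sum_univ_two] using (by simpa only [Matrix.SpecialLinearGroup.coe_mul] using hentry.symm :
            ((uMat b : Matrix (Fin 2) (Fin 2) F) * (sMat F : Matrix (Fin 2) (Fin 2) F)) 0 0
            = ((sMat F : Matrix (Fin 2) (Fin 2) F) * (uMat b : Matrix (Fin 2) (Fin 2) F)) 0 0)
      have hright : a.right = 1 := by
        have : Multiplicative.toAdd a.right = (0 : ZMod 2) := by
          have hv := hg
          have : ∀ z : ZMod 2, z.val = 0 → z = 0 := by decide
          exact this _ hv
        exact Multiplicative.toAdd.injective this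
      exact SemidirectProduct.ext (hleft hb0) hright
    · rw [pow_one] at hf2
      rw [hf2, ← _root_.map_mul] at ha
      have hmem : uMat b * wMat i hi ∈ Subgroup.center (SL2 F) :=
        (QuotientGroup.eq_one_iff _).mp ha
      have hcomm := (Subgroup.mem_center_iff.mp hmem) (sMat F)
      have hentry := congrFun (congrFun (congrArg Subtype.val hcomm) 0) 1
      have h2i : (2 : F) * i = 0 := by
        have h' : i = -i := by
          simpa [uMat, wMat, sMat, Matrix.SpecialLinearGroup.coe_mul,
            Matrix.mul_apply, Fin.sum_univ_two] using (by simpa only [Matrix.SpecialLinearGroup.coe_mul] using hentry :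
              ((sMat F : Matrix (Fin 2) (Fin 2) F) * ((uMat b : Matrix (Fin 2) (Fin 2) F)
                * (wMat i hi : Matrix (Fin 2) (Fin 2) F))) 0 1
              = ((uMat b : Matrix (Fin 2) (Fin 2) F) * (wMat i hi : Matrix (Fin 2) (Fin 2) F)
                * (sMat F : Matrix (Fin 2) (Fin 2) F)) 0 1)
        linear_combination h'
      rcases mul_eq_zero.mp h2i with h | h
      · exact absurd h two_ne
      · exact absurd h i_ne
  -- range
  have hu_stab : ∀ b : F,
      uMat b ∈ MulAction.stabilizer (SL2 F) (mkPt F i ![1, 0] (vec_fst_ne_zero 0)) := by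
    intro b
    rw [MulAction.mem_stabilizer_iff]
    show Quot.mk (vrel F i) (slVecSMul (uMat b) ⟨![1, 0], vec_fst_ne_zero 0⟩)
      = Quot.mk (vrel F i) ⟨![1, 0], vec_fst_ne_zero 0⟩
    congr 1
    apply Subtype.ext
    show (uMat b : Matrix (Fin 2) (Fin 2) F) *ᵥ ![1, 0] = ![1, 0]
    rw [mulVec_e0]
    simp [uMat]
  have hw_stab : wMat i hi ∈
      MulAction.stabilizer (SL2 F) (mkPt F i ![1, 0] (vec_fst_ne_zero 0)) := by
    rw [MulAction.mem_stabilizer_iff]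
    show Quot.mk (vrel F i) (slVecSMul (wMat i hi) ⟨![1, 0], vec_fst_ne_zero 0⟩)
      = Quot.mk (vrel F i) ⟨![1, 0], vec_fst_ne_zero 0⟩
    refine (Quot.sound ?_).symm
    refine ⟨1, ?_⟩
    show (wMat i hi : Matrix (Fin 2) (Fin 2) F) *ᵥ ![1, 0] = i ^ 1 • ![1, 0]
    rw [mulVec_e0]
    funext j
    fin_cases j <;> simp [wMat]
  have hrange : ψ.range = pslPtStab F i (mkPt F i ![1, 0] (vec_fst_ne_zero 0)) := by
    apply le_antisymm
    · rintro x ⟨a, rfl⟩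
      rw [hψ]
      apply Subgroup.mul_mem
      · rw [hf₁]
        exact Subgroup.mem_map_of_mem _ (hu_stab _)
      · have hf2 : f₂ a.right = mk (wMat i hi) ^ (Multiplicative.toAdd a.right).val := rfl
        rw [hf2]
        exact Subgroup.pow_mem _ (Subgroup.mem_map_of_mem _ hw_stab) _
    · rintro x ⟨A, hA, rfl⟩
      rw [SetLike.mem_coe, MulAction.mem_stabilizer_iff] at hA
      have hA' : Quot.mk (vrel F i) (slVecSMul A ⟨![1, 0], vec_fst_ne_zero 0⟩)
          = Quot.mk (vrel F i) ⟨![1, 0], vec_fst_ne_zero 0⟩ := hA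
      obtain ⟨n, hn⟩ :=
        ((vrel_equivalence i hi).eqvGen_iff).mp (Quot.eqvGen_exact hA'.symm)
      have hn' : (A : Matrix (Fin 2) (Fin 2) F) *ᵥ ![1, 0] = i ^ n • ![1, 0] := hn
      rw [mulVec_e0] at hn'
      have h00 : (A : Matrix (Fin 2) (Fin 2) F) 0 0 = i ^ n := by
        have := congrFun hn' 0; simpa using this
      have h10 : (A : Matrix (Fin 2) (Fin 2) F) 1 0 = 0 := by
        have := congrFun hn' 1; simpa using this
      have hdet : (A : Matrix (Fin 2) (Fin 2) F) 0 0 * (A : Matrix (Fin 2) (Fin 2) F) 1 1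
          - (A : Matrix (Fin 2) (Fin 2) F) 0 1 * (A : Matrix (Fin 2) (Fin 2) F) 1 0 = 1 := by
        rw [← Matrix.det_fin_two]; exact A.2
      set b := (A : Matrix (Fin 2) (Fin 2) F) 0 1 with hbdef
      set d := (A : Matrix (Fin 2) (Fin 2) F) 1 1 with hddef
      have hdet' : i ^ n * d = 1 := by linear_combination hdet + b * h10 - d * h00
      have hpow : i ^ n = i ^ (n % 4) := by
        conv_lhs => rw [← Nat.div_add_mod n 4]
        rw [pow_add, pow_mul, h4, one_pow, one_mul]
      rw [hpow] at hdet' h00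
      have key : ∀ (b₀ : F) (k : Multiplicative (ZMod 2)) (c : SL2 F),
          c ∈ Subgroup.center (SL2 F) →
          A = uMat b₀ * (wMat i hi) ^ (Multiplicative.toAdd k).val * c →
          mk A ∈ ψ.range := by
        intro b₀ k c hc hAeq
        refine ⟨⟨e' (Multiplicative.ofAdd b₀), k⟩, ?_⟩
        rw [hψ]
        have h1 : f₁ (e' (Multiplicative.ofAdd b₀)) = mk (uMat b₀) := by
          rw [hf₁, MulEquiv.symm_apply_apply]
          rfl
        have h2 : f₂ k = mk ((wMat i hi) ^ (Multiplicative.toAdd k).val) := by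
          show mk (wMat i hi) ^ (Multiplicative.toAdd k).val = _
          rw [_root_.map_pow]
        have hc1 : mk c = 1 := (QuotientGroup.eq_one_iff _).mpr hc
        rw [h1, h2, hAeq]
        simp only [_root_.map_mul, hc1, mul_one]
      have hAeta : (A : Matrix (Fin 2) (Fin 2) F)
          = !![(A : Matrix (Fin 2) (Fin 2) F) 0 0, b; 0, d] := by
        conv_lhs => rw [Matrix.eta_fin_two (A : Matrix (Fin 2) (Fin 2) F)]
        rw [h10]
      have hval0 : (Multiplicative.toAdd (1 : Multiplicative (ZMod 2))).val = 0 := rfl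
      have hval1 : (Multiplicative.toAdd (Multiplicative.ofAdd (1 : ZMod 2))).val = 1 := rfl
      have hm4 : n % 4 = 0 ∨ n % 4 = 1 ∨ n % 4 = 2 ∨ n % 4 = 3 := by omega
      rcases hm4 with hm | hm | hm | hm <;> rw [hm] at hdet' h00
      · -- diagonal entry 1
        rw [pow_zero] at hdet' h00
        rw [one_mul] at hdet'
        refine key b 1 1 (Subgroup.one_mem _) ?_
        rw [hval0, pow_zero, mul_one, mul_one]
        apply Subtype.ext
        show (A : Matrix (Fin 2) (Fin 2) F) = _
        rw [hAeta, h00, hdet']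
        rfl
      · -- diagonal entry i
        rw [pow_one] at hdet' h00
        have hd : d = -i := by linear_combination (-i) * hdet' + d * hi
        refine key (b * i) (Multiplicative.ofAdd 1) 1 (Subgroup.one_mem _) ?_
        rw [hval1, pow_one, mul_one]
        apply Subtype.ext
        show (A : Matrix (Fin 2) (Fin 2) F) = ((uMat (b * i) * wMat i hi : SL2 F) : Matrix (Fin 2) (Fin 2) F)
        rw [hAeta, h00, hd, Matrix.SpecialLinearGroup.coe_mul]
        ext x y
        fin_cases x <;> fin_cases y <;>
          simp [uMat, wMat, Matrix.mul_apply, Fin.sum_univ_two] <;>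
          first
            | ring1
            | linear_combination b * hi
            | linear_combination -b * hi
      · -- diagonal entry -1
        rw [hi] at hdet' h00
        have hd : d = -1 := by linear_combination -hdet'
        refine key (-b) 1 negI negI_mem_center ?_
        rw [hval0, pow_zero, mul_one]
        apply Subtype.ext
        show (A : Matrix (Fin 2) (Fin 2) F) = ((uMat (-b) * negI : SL2 F) : Matrix (Fin 2) (Fin 2) F)
        rw [hAeta, h00, hd, Matrix.SpecialLinearGroup.coe_mul]
        ext x y
        fin_cases x <;> fin_cases y <;>
          simp [uMat, negI, Matrix.neg_apply, Matrix.one_apply] <;>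
          first
            | ring1
            | linear_combination b * hi
            | linear_combination -b * hi
      · -- diagonal entry -i
        have h3 : i ^ 3 = -i := by linear_combination i * hi
        rw [h3] at hdet' h00
        have hd : d = i := by linear_combination i * hdet' + d * hi
        refine key (-(b * i)) (Multiplicative.ofAdd 1) negI negI_mem_center ?_
        rw [hval1, pow_one]
        apply Subtype.ext
        show (A : Matrix (Fin 2) (Fin 2) F)
            = ((uMat (-(b * i)) * wMat i hi * negI : SL2 F) : Matrix (Fin 2) (Fin 2) F)
        rw [hAeta, h00, hd, Matrix.SpecialLinearGroup.coe_mul, Matrix.SpecialLinearGroup.coe_mul]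
        ext x y
        fin_cases x <;> fin_cases y <;>
          simp [uMat, wMat, negI, Matrix.mul_apply, Fin.sum_univ_two, Matrix.neg_apply,
            Matrix.one_apply] <;>
          first
            | ring1
            | linear_combination b * hi
            | linear_combination -b * hi
  exact ⟨(MulEquiv.subgroupCongr hrange).symm.trans (MonoidHom.ofInjective hinj).symm⟩
end

section
/- Let q ≡ 1 (mod 4) be a prime power not a power of 5. In the octahedral design D with |B| = q(q²-1)/24 blocks, each block containing 3 diagonals, and q(q²-1)/8 diagonals in total on which the group acts transitively: every diagonal is contained in exactly one block. -/
open Matrix MulAction Pointwise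

/-- The basic block (octahedron) `T`. -/
def basicT (F : Type) [Field F] (i : F) : Set (Pts F i) :=
  {mkPt F i ![1, 0] (vec_fst_ne_zero 0), mkPt F i ![0, 1] (vec_snd_ne_zero 0),
   mkPt F i ![1, 1] (vec_fst_ne_zero 1), mkPt F i ![1 + i, 1] (vec_snd_ne_zero (1 + i)),
   mkPt F i ![i, 1] (vec_snd_ne_zero i), mkPt F i ![1, 1 - i] (vec_fst_ne_zero (1 - i))}

/-- The set of diagonals: the orbit of the basic diagonal `{[(1,0)], [(1,1-i)]}`. -/
def diagonals (F : Type) [Field F] (i : F) : Set (Set (Pts F i)) :=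
  MulAction.orbit (SL2 F)
    ({mkPt F i ![1, 0] (vec_fst_ne_zero 0),
      mkPt F i ![1, 1 - i] (vec_fst_ne_zero (1 - i))} : Set (Pts F i))

instance vecFinite {F : Type} [Field F] [Fintype F] : Finite (Vec F) := by
  unfold Vec; infer_instance

instance ptsFinite {F : Type} [Field F] [Fintype F] {i : F} : Finite (Pts F i) := by
  unfold Pts; exact Quot.finite _

/-- A general double-counting lemma. -/
lemma aux_double_count {α β : Type} [Finite α] [Finite β] {n m : ℕ} (A : Set α) (B : Set β)
    (R : α → β → Prop)
    (hA : ∀ a ∈ A, Nat.card {b : β | b ∈ B ∧ R a b} = n)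
    (hB : ∀ b ∈ B, Nat.card {a : α | a ∈ A ∧ R a b} = m) :
    n * Nat.card A = m * Nat.card B := by
  classical
  have key : ∀ (ι : Type) (_ : Finite ι) (f : ι → Type) (_ : ∀ j, Finite (f j)) (k : ℕ),
      (∀ j, Nat.card (f j) = k) → Nat.card (Σ j, f j) = k * Nat.card ι := by
    intro ι hι f hf k hk
    have i1 : Fintype ι := Fintype.ofFinite ι
    have i2 : ∀ j, Fintype (f j) := fun j => Fintype.ofFinite _
    rw [Nat.card_eq_fintype_card, Fintype.card_sigma, Nat.card_eq_fintype_card]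
    have hk' : ∀ j, Fintype.card (f j) = k := fun j => by
      rw [← Nat.card_eq_fintype_card]; exact hk j
    simp [hk', Finset.sum_const, mul_comm]
  have e1 : {p : α × β // p.1 ∈ A ∧ p.2 ∈ B ∧ R p.1 p.2} ≃
      Σ a : A, {b : β // b ∈ B ∧ R a.1 b} :=
    { toFun := fun x => ⟨⟨x.1.1, x.2.1⟩, ⟨x.1.2, x.2.2.1, x.2.2.2⟩⟩
      invFun := fun y => ⟨(y.1.1, y.2.1), y.1.2, y.2.2.1, y.2.2.2⟩
      left_inv := fun x => rfl
      right_inv := fun y => rfl }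
  have e2 : {p : α × β // p.1 ∈ A ∧ p.2 ∈ B ∧ R p.1 p.2} ≃
      Σ b : B, {a : α // a ∈ A ∧ R a b.1} :=
    { toFun := fun x => ⟨⟨x.1.2, x.2.2.1⟩, ⟨x.1.1, x.2.1, x.2.2.2⟩⟩
      invFun := fun y => ⟨(y.2.1, y.1.1), y.2.2.1, y.1.2, y.2.2.2⟩
      left_inv := fun x => rfl
      right_inv := fun y => rfl }
  calc n * Nat.card A
      = Nat.card (Σ a : A, {b : β // b ∈ B ∧ R a.1 b}) :=
        (key A inferInstance _ inferInstance n (fun a => hA a.1 a.2)).symm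
    _ = Nat.card {p : α × β // p.1 ∈ A ∧ p.2 ∈ B ∧ R p.1 p.2} := (Nat.card_congr e1).symm
    _ = Nat.card (Σ b : B, {a : α // a ∈ A ∧ R a b.1}) := Nat.card_congr e2
    _ = m * Nat.card B := key B inferInstance _ inferInstance m (fun b => hB b.1 b.2)

/-- Translating by a group element gives an equivalence between the blocks containing `d`
and the blocks containing `g • d`. -/
noncomputable def aux_fiber_equiv {F : Type} [Field F] (i : F) (g : SL2 F) (d : Set (Pts F i)) :
    {β : Set (Pts F i) | β ∈ MulAction.orbit (SL2 F) (basicT F i) ∧ d ⊆ β} ≃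
    {β : Set (Pts F i) | β ∈ MulAction.orbit (SL2 F) (basicT F i) ∧ (g • d) ⊆ β} where
  toFun β := ⟨g • β.1, by
    obtain ⟨⟨h, hh⟩, hd⟩ := β.2
    exact ⟨⟨g * h, by rw [← hh]; exact mul_smul g h _⟩, Set.smul_set_mono hd⟩⟩
  invFun β := ⟨g⁻¹ • β.1, by
    obtain ⟨⟨h, hh⟩, hd⟩ := β.2
    refine ⟨⟨g⁻¹ * h, by rw [← hh]; exact mul_smul g⁻¹ h _⟩, ?_⟩
    have h2 := Set.smul_set_mono (a := g⁻¹) hd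
    rwa [inv_smul_smul] at h2⟩
  left_inv β := Subtype.ext (inv_smul_smul g β.1)
  right_inv β := Subtype.ext (smul_inv_smul g β.1)

/-- In the octahedral design with `|B| = q(q²-1)/24` blocks, each block containing 3
diagonals, and `q(q²-1)/8` diagonals in total, every diagonal is contained in exactly
one block. -/
theorem stmt_11 (q : ℕ) (F : Type) [Field F] [Fintype F]
    (hcard : Fintype.card F = q) (hq : q % 4 = 1) (h5 : ringChar F ≠ 5)
    (i : F) (hi : i ^ 2 = -1)
    (hB : Nat.card (MulAction.orbit (SL2 F) (basicT F i)) = q * (q ^ 2 - 1) / 24)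
    (hΔ : Nat.card (diagonals F i) = q * (q ^ 2 - 1) / 8)
    (h3 : ∀ β ∈ MulAction.orbit (SL2 F) (basicT F i),
      Nat.card {d : Set (Pts F i) | d ∈ diagonals F i ∧ d ⊆ β} = 3) :
    ∀ d ∈ diagonals F i,
      Nat.card {β : Set (Pts F i) | β ∈ MulAction.orbit (SL2 F) (basicT F i) ∧ d ⊆ β} = 1 := by
  classical
  set d₀ : Set (Pts F i) :=
    ({mkPt F i ![1, 0] (vec_fst_ne_zero 0),
      mkPt F i ![1, 1 - i] (vec_fst_ne_zero (1 - i))} : Set (Pts F i)) with hd₀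
  set n := Nat.card
    {β : Set (Pts F i) | β ∈ MulAction.orbit (SL2 F) (basicT F i) ∧ d₀ ⊆ β} with hn
  have hconst : ∀ d ∈ diagonals F i,
      Nat.card {β : Set (Pts F i) | β ∈ MulAction.orbit (SL2 F) (basicT F i) ∧ d ⊆ β} = n := by
    intro d hd
    obtain ⟨g, rfl⟩ := hd
    exact (Nat.card_congr (aux_fiber_equiv i g d₀)).symm
  have hdc := aux_double_count (diagonals F i) (MulAction.orbit (SL2 F) (basicT F i))
    (fun d β => d ⊆ β) hconst h3
  rw [hΔ, hB] at hdc
  -- arithmetic: conclude n = 1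
  have hq2 : 2 ≤ q := hcard ▸ Fintype.one_lt_card
  have hq5 : 5 ≤ q := by omega
  obtain ⟨k, hk⟩ : ∃ k, q = 4 * k + 1 := ⟨q / 4, by omega⟩
  have h8 : q ^ 2 - 1 = 8 * (2 * k ^ 2 + k) := by
    have : (4 * k + 1) ^ 2 = 8 * (2 * k ^ 2 + k) + 1 := by ring
    rw [hk, this, Nat.add_sub_cancel]
  have hfac : q ^ 2 - 1 = (q - 1) * (q + 1) := by
    obtain ⟨m, hm⟩ : ∃ m, q = m + 1 := ⟨q - 1, by omega⟩
    have h1 : (m + 1) ^ 2 = m * (m + 2) + 1 := by ring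
    rw [hm, h1, Nat.add_sub_cancel]
    simp [Nat.add_sub_cancel]
  have h3dvd : 3 ∣ q * (q ^ 2 - 1) := by
    have hcases : 3 ∣ q ∨ 3 ∣ q - 1 ∨ 3 ∣ q + 1 := by
      have : q % 3 = 0 ∨ q % 3 = 1 ∨ q % 3 = 2 := by omega
      rcases this with h | h | h
      · exact Or.inl (by omega)
      · exact Or.inr (Or.inl (by omega))
      · exact Or.inr (Or.inr (by omega))
    rcases hcases with h | h | h
    · exact dvd_mul_of_dvd_left h _
    · exact dvd_mul_of_dvd_right (hfac ▸ dvd_mul_of_dvd_left h _) _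
    · exact dvd_mul_of_dvd_right (hfac ▸ dvd_mul_of_dvd_right h _) _
  have h24 : 24 ∣ q * (q ^ 2 - 1) := by
    have h8' : 8 ∣ q * (q ^ 2 - 1) := dvd_mul_of_dvd_right ⟨2 * k ^ 2 + k, h8⟩ _
    have := Nat.Coprime.mul_dvd_of_dvd_of_dvd (by norm_num : Nat.Coprime 8 3) h8' h3dvd
    norm_num at this
    exact this
  obtain ⟨m, hm⟩ := h24
  have hmpos : 0 < m := by
    have h25 : 25 ≤ q ^ 2 := by
      calc (25 : ℕ) = 5 ^ 2 := by norm_num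
        _ ≤ q ^ 2 := Nat.pow_le_pow_left hq5 2
    have h120 : 120 ≤ q * (q ^ 2 - 1) := by
      calc (120 : ℕ) = 5 * 24 := by norm_num
        _ ≤ q * (q ^ 2 - 1) := Nat.mul_le_mul hq5 (by omega)
    omega
  rw [hm] at hdc
  have e8 : 24 * m / 8 = 3 * m := by omega
  have e24 : 24 * m / 24 = m := by omega
  rw [e8, e24] at hdc
  have hn1 : n = 1 := by
    have h3m : 0 < 3 * m := by omega
    exact Nat.eq_of_mul_eq_mul_right h3m (by rw [one_mul]; exact hdc)
  intro d hd
  rw [hconst d hd, hn1]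
end
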